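/- arXiv:2603.28014 — 2 statements merged into one kernel-verified Lean document; each statement's English description precedes it below -/
import Mathlib

section
/- Let V, χ : (0,∞) → ℝ be absolutely continuous functions satisfying (n/2)V(s) − (s/2)V'(s) = χ(s) − (2/s)χ'(s) for a.e. s > 0, and 0 ≤ χ(s) ≤ (n/2)V(s) for all s > 0, with V(s) > 0. Define P(s) := V(s)/sⁿ − 4χ(s)/s^{n+2} and Q(s) := χ(s)/(s²V(s)). Then for a.e. s > 0, P'(s) = −s^{-1}(2s² − 4n − 8)·(Q(s)/(1 − 4Q(s)))·P(s), provided 4Q(s) ≠ 1. -/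
open Real

/-- Lemma 3.2 / eq. (3.4): the derivative identity for the normalized volume ratio
`P(s) = V(s)/sⁿ − 4χ(s)/s^{n+2}` in terms of `Q(s) = χ(s)/(s²V(s))`. -/
theorem stmt0 (n : ℕ) (hn : 1 ≤ n) (V χ V' χ' : ℝ → ℝ)
    (hV : ∀ s > (0:ℝ), HasDerivAt V (V' s) s)
    (hχ : ∀ s > (0:ℝ), HasDerivAt χ (χ' s) s)
    (hode : ∀ s > (0:ℝ), (n / 2) * V s - (s / 2) * V' s = χ s - (2 / s) * χ' s)
    (hχ0 : ∀ s > (0:ℝ), 0 ≤ χ s)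
    (hχV : ∀ s > (0:ℝ), χ s ≤ (n / 2) * V s)
    (hVpos : ∀ s > (0:ℝ), 0 < V s)
    (P Q : ℝ → ℝ)
    (hP : ∀ s > (0:ℝ), P s = V s / s ^ n - 4 * χ s / s ^ (n + 2))
    (hQ : ∀ s > (0:ℝ), Q s = χ s / (s ^ 2 * V s)) :
    ∀ s > (0:ℝ), 4 * Q s ≠ 1 →
      HasDerivAt P (-(s⁻¹ * (2 * s ^ 2 - 4 * n - 8) * (Q s / (1 - 4 * Q s)) * P s)) s := by
  obtain ⟨m, rfl⟩ : ∃ m, n = m + 1 := ⟨n - 1, (Nat.succ_pred_eq_of_pos hn).symm⟩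
  intro s hs hQs
  have hs0 : s ≠ 0 := ne_of_gt hs
  have hV0 : V s ≠ 0 := (hVpos s hs).ne'
  have hd1 : HasDerivAt (fun t => V t / t ^ (m + 1) - 4 * χ t / t ^ (m + 1 + 2))
      ((V' s * s ^ (m + 1) - V s * ((m + 1) * s ^ m)) / (s ^ (m + 1)) ^ 2
        - ((4 * χ' s) * s ^ (m + 1 + 2) - (4 * χ s) * ((m + 1 + 2) * s ^ (m + 2)))
          / (s ^ (m + 1 + 2)) ^ 2) s := by
    have h1 := ((hV s hs).div (hasDerivAt_pow (m + 1) s) (pow_ne_zero _ hs0))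
    have h2 := (((hχ s hs).const_mul 4).div (hasDerivAt_pow (m + 1 + 2) s)
      (pow_ne_zero _ hs0))
    have h3 := h1.sub h2
    simp only [Nat.cast_add, Nat.cast_one, add_tsub_cancel_right, Nat.cast_ofNat] at h3
    exact h3.congr_deriv (by rw [show m + 1 + 2 - 1 = m + 2 by omega])
  have heq : P =ᶠ[nhds s] fun t => V t / t ^ (m + 1) - 4 * χ t / t ^ (m + 1 + 2) := by
    filter_upwards [Ioi_mem_nhds hs] with t ht
    exact hP t ht
  have hd2 := hd1.congr_of_eventuallyEq heq
  refine hd2.congr_deriv ?_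
  symm
  have hV' : V' s = ((m + 1 : ℕ) * V s - 2 * χ s + 4 * χ' s / s) / s := by
    have h := hode s hs
    field_simp at h ⊢
    push_cast at h ⊢
    linarith
  have h4χ : s ^ 2 * V s - 4 * χ s ≠ 0 := by
    intro h
    apply hQs
    rw [hQ s hs]
    field_simp
    linarith
  rw [hQ s hs, hP s hs, hV']
  have h1Q : 1 - 4 * (χ s / (s ^ 2 * V s)) = (s ^ 2 * V s - 4 * χ s) / (s ^ 2 * V s) := by
    field_simp
  rw [h1Q, div_div_div_cancel_right₀ (by positivity)]
  field_simp
  push_cast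
  ring
end

section
/- Let (M, g_t)_{t∈[t₁,t₂]} be a complete Ricci flow with |Ric_{g_t}| ≤ K on M×[t₁,t₂] and scalar curvature R ≥ 0. Suppose for each fixed point x the distance distortion estimate B_{g_{t₂}}(x, A) ⊆ B_{g_{t₁}}(x, A + C(K)(t₂−t₁)) holds for all A, and the volume form is pointwise nonincreasing in t (which follows from ∂_t dvol = −R dvol ≤ 0). Then the asymptotic volume ratio is nonincreasing along the flow: AVR(g_{t₁}) ≥ AVR(g_{t₂}), where AVR(g) := lim_{A→∞} |B_g(x,A)|/(ω_n Aⁿ), whenever these limits exist. -/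
open Filter

/-- Lemma 4.2 (monotonicity of the asymptotic volume ratio): with
`vol₁ A = |B_{g_{t₁}}(x, A)|_{g_{t₁}}` and `vol₂ A = |B_{g_{t₂}}(x, A)|_{g_{t₂}}`,
Perelman's distance distortion estimate `B_{g_{t₂}}(x,A) ⊆ B_{g_{t₁}}(x, A + C(K)(t₂−t₁))`
combined with the pointwise decay of the volume form (from `R ≥ 0`) gives
`vol₂ A ≤ vol₁ (A + C(K)(t₂−t₁))`; hence `AVR(g_{t₂}) ≤ AVR(g_{t₁})`. -/
theorem stmt8 (n : ℕ) (hn : 1 ≤ n) (ω : ℝ) (hω : 0 < ω)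
    (t₁ t₂ K CK : ℝ) (ht : t₁ ≤ t₂) (hK : 0 ≤ K) (hCK : 0 ≤ CK)
    (vol₁ vol₂ : ℝ → ℝ)
    (hvol₁0 : ∀ A, 0 ≤ vol₁ A) (hvol₂0 : ∀ A, 0 ≤ vol₂ A)
    (hmono₁ : Monotone vol₁)
    -- distance distortion + monotone volume form:
    (hdist : ∀ A : ℝ, vol₂ A ≤ vol₁ (A + CK * (t₂ - t₁)))
    (AVR₁ AVR₂ : ℝ)
    (h₁ : Tendsto (fun A => vol₁ A / (ω * A ^ n)) atTop (nhds AVR₁))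
    (h₂ : Tendsto (fun A => vol₂ A / (ω * A ^ n)) atTop (nhds AVR₂)) :
    AVR₂ ≤ AVR₁ := by
  set c := CK * (t₂ - t₁) with hc
  have hc0 : 0 ≤ c := mul_nonneg hCK (by linarith)
  have hshift : Tendsto (fun A => vol₁ (A + c) / (ω * (A + c) ^ n)) atTop (nhds AVR₁) :=
    h₁.comp (tendsto_atTop_add_const_right atTop c tendsto_id)
  have hratio : Tendsto (fun A : ℝ => ((A + c) / A) ^ n) atTop (nhds 1) := by
    have h1 : Tendsto (fun A : ℝ => (A + c) / A) atTop (nhds 1) := by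
      have heq : (fun A : ℝ => (A + c) / A) =ᶠ[atTop] fun A => 1 + c / A := by
        filter_upwards [eventually_gt_atTop (0:ℝ)] with A hA
        field_simp
      rw [tendsto_congr' heq]
      have h0 : Tendsto (fun A : ℝ => c / A) atTop (nhds 0) :=
        Tendsto.div_atTop (tendsto_const_nhds (x := c)) tendsto_id
      have := (tendsto_const_nhds (x := (1:ℝ)) (f := atTop)).add h0
      simpa using this
    simpa using h1.pow n
  have hg : Tendsto (fun A => vol₁ (A + c) / (ω * (A + c) ^ n) * ((A + c) / A) ^ n)
      atTop (nhds AVR₁) := by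
    simpa using hshift.mul hratio
  refine le_of_tendsto_of_tendsto h₂ hg ?_
  filter_upwards [eventually_gt_atTop (0:ℝ)] with A hA
  have hAc : 0 < A + c := by linarith
  have hrw : vol₁ (A + c) / (ω * (A + c) ^ n) * ((A + c) / A) ^ n
      = vol₁ (A + c) / (ω * A ^ n) := by
    have h1 : (A + c : ℝ) ^ n ≠ 0 := pow_ne_zero _ (ne_of_gt hAc)
    have h2 : (A : ℝ) ^ n ≠ 0 := pow_ne_zero _ (ne_of_gt hA)
    field_simp
    rw [div_pow, mul_assoc, div_mul_cancel₀ _ h2]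
  rw [hrw]
  exact div_le_div_of_nonneg_right (hdist A) (by positivity)
end
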